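/- Let φ: ℝ/ℤ → ℝ be continuous and let a₀: ℝ/ℤ → ℝ be continuous with min a₀ > 0. Define g₀(t) = ∫_{{s : φ(s) ≤ t}} a₀(s) ds. If s₀ is a point with |φ(s) - φ(s₀)| ≤ c|s - s₀|² for all s near s₀ (for some c > 0), then g₀ is not Hölder continuous of any exponent α > 1/2 at t₀ = φ(s₀); indeed g₀(t₀+h) - g₀(t₀-h) ≥ √(h/c)·(min a₀) for all sufficiently small h > 0. -/

import Mathlib

open MeasureTheory Set

/-- A degenerate critical point of `φ` produces a big singularity of the
distribution function `g₀(t) = ∫_{φ ≤ t} a₀`: near the critical value `t₀`,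
`g₀(t₀+h) - g₀(t₀-h) ≥ √(h/c)·(min a₀)`, and `g₀` is not `α`-Hölder at `t₀`
for any `α > 1/2`. -/
theorem distribution_function_big_singularity
    (φ a₀ : AddCircle (1 : ℝ) → ℝ)
    (hφ : Continuous φ) (ha₀ : Continuous a₀)
    (m : ℝ) (hm : 0 < m) (hmin : ∀ s, m ≤ a₀ s)
    (g₀ : ℝ → ℝ)
    (hg₀ : ∀ τ : ℝ, g₀ τ = ∫ s in {s : AddCircle (1 : ℝ) | φ s ≤ τ}, a₀ s)
    (s₀ : AddCircle (1 : ℝ)) (c : ℝ) (hc : 0 < c)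
    (hdeg : ∃ r : ℝ, 0 < r ∧ ∀ s : AddCircle (1 : ℝ),
      dist s s₀ < r → |φ s - φ s₀| ≤ c * (dist s s₀) ^ 2) :
    (∃ h₀ : ℝ, 0 < h₀ ∧ ∀ h : ℝ, 0 < h → h < h₀ →
        Real.sqrt (h / c) * m ≤ g₀ (φ s₀ + h) - g₀ (φ s₀ - h)) ∧
    (∀ α : ℝ, 1 / 2 < α →
      ¬ ∃ K : ℝ, ∀ τ : ℝ, |g₀ τ - g₀ (φ s₀)| ≤ K * |τ - φ s₀| ^ α) := by
  obtain ⟨r, hr, hdeg⟩ := hdeg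
  set t₀ := φ s₀ with ht₀
  set h₀ : ℝ := min c (c * r ^ 2) with hh₀def
  have hh₀pos : 0 < h₀ := lt_min hc (by positivity)
  have hint : Integrable a₀ (volume : Measure (AddCircle (1 : ℝ))) :=
    integrableOn_univ.mp (ha₀.continuousOn.integrableOn_compact isCompact_univ)
  have key : ∀ h : ℝ, 0 < h → h < h₀ →
      Real.sqrt (h / c) * m ≤ g₀ (t₀ + h) - g₀ (t₀ - h) := by
    intro h hh hh'
    have hh1 : h < c := lt_of_lt_of_le hh' (min_le_left _ _)
    have hh2 : h < c * r ^ 2 := lt_of_lt_of_le hh' (min_le_right _ _)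
    set ρ := Real.sqrt (h / c) / 2 with hρdef
    have hsq_pos : 0 < Real.sqrt (h / c) := Real.sqrt_pos.mpr (div_pos hh hc)
    have hρ_pos : 0 < ρ := by positivity
    have hsq_le_one : Real.sqrt (h / c) ≤ 1 := by
      rw [show (1 : ℝ) = Real.sqrt 1 by simp]
      exact Real.sqrt_le_sqrt ((div_le_one hc).mpr hh1.le)
    have hsq_lt_r : Real.sqrt (h / c) < r := by
      have h1 : h / c < r ^ 2 := (div_lt_iff₀' hc).mpr hh2
      calc Real.sqrt (h / c) < Real.sqrt (r ^ 2) :=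
            Real.sqrt_lt_sqrt (by positivity) h1
        _ = r := Real.sqrt_sq hr.le
    have hρ_lt_r : ρ < r := by rw [hρdef]; linarith
    set A := {s : AddCircle (1 : ℝ) | φ s ≤ t₀ + h} with hAdef
    set B := {s : AddCircle (1 : ℝ) | φ s ≤ t₀ - h} with hBdef
    have hA : MeasurableSet A := (isClosed_le hφ continuous_const).measurableSet
    have hB : MeasurableSet B := (isClosed_le hφ continuous_const).measurableSet
    have hBA : B ⊆ A := by
      intro s hs
      have h1 : φ s ≤ t₀ - h := hs
      show φ s ≤ t₀ + h
      linarith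
    have hdiff : g₀ (t₀ + h) - g₀ (t₀ - h) = ∫ s in A \ B, a₀ s := by
      rw [hg₀, hg₀]
      exact (integral_diff hB hint.integrableOn hBA).symm
    have hball : Metric.closedBall s₀ ρ ⊆ A \ B := by
      intro s hs
      have hd : dist s s₀ ≤ ρ := hs
      have h1 : |φ s - t₀| ≤ c * dist s s₀ ^ 2 := hdeg s (lt_of_le_of_lt hd hρ_lt_r)
      have hρ2 : c * ρ ^ 2 = h / 4 := by
        rw [hρdef, div_pow, Real.sq_sqrt (by positivity : (0:ℝ) ≤ h / c)]
        field_simp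
        ring
      have h2 : c * dist s s₀ ^ 2 ≤ h / 4 := by
        rw [← hρ2]
        have hdn : (0 : ℝ) ≤ dist s s₀ := dist_nonneg
        have hsq : dist s s₀ ^ 2 ≤ ρ ^ 2 := by nlinarith
        exact mul_le_mul_of_nonneg_left hsq hc.le
      have h3 : |φ s - t₀| < h := by linarith
      obtain ⟨h4, h5⟩ := abs_lt.mp h3
      constructor
      · show φ s ≤ t₀ + h
        linarith
      · show ¬ φ s ≤ t₀ - h
        intro hcon; linarith
    have hvol : volume (Metric.closedBall s₀ ρ) = ENNReal.ofReal (Real.sqrt (h / c)) := by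
      rw [AddCircle.volume_closedBall]
      congr 1
      rw [show 2 * ρ = Real.sqrt (h / c) by rw [hρdef]; ring]
      exact min_eq_right hsq_le_one
    have hμAB : volume (A \ B) ≠ ⊤ := measure_ne_top _ _
    have hlb : m * (volume (A \ B)).toReal ≤ ∫ s in A \ B, a₀ s :=
      by
        have hge := setIntegral_ge_of_const_le (hA.diff hB) hμAB (fun x _ => hmin x) hint.integrableOn
        rw [smul_eq_mul, mul_comm] at hge
        exact hge
    have hmono : Real.sqrt (h / c) ≤ (volume (A \ B)).toReal := by
      have hmm : volume (Metric.closedBall s₀ ρ) ≤ volume (A \ B) := measure_mono hball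
      rw [hvol] at hmm
      have h1 : (ENNReal.ofReal (Real.sqrt (h / c))).toReal ≤ (volume (A \ B)).toReal :=
        ENNReal.toReal_mono hμAB hmm
      rwa [ENNReal.toReal_ofReal hsq_pos.le] at h1
    calc Real.sqrt (h / c) * m = m * Real.sqrt (h / c) := mul_comm _ _
      _ ≤ m * (volume (A \ B)).toReal := by gcongr
      _ ≤ ∫ s in A \ B, a₀ s := hlb
      _ = g₀ (t₀ + h) - g₀ (t₀ - h) := hdiff.symm
  refine ⟨⟨h₀, hh₀pos, key⟩, ?_⟩
  rintro α hα ⟨K, hK⟩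
  set β := α - 1 / 2 with hβdef
  have hβpos : 0 < β := by rw [hβdef]; linarith
  have hsc : 0 < Real.sqrt c := Real.sqrt_pos.mpr hc
  have hupper : ∀ h : ℝ, 0 < h → h < h₀ → m / Real.sqrt c ≤ 2 * K * h ^ β := by
    intro h hh hh'
    have h1 := key h hh hh'
    have e1 : |t₀ + h - t₀| = h := by rw [add_sub_cancel_left, abs_of_pos hh]
    have e2 : |t₀ - h - t₀| = h := by
      rw [show t₀ - h - t₀ = -h by ring, abs_neg, abs_of_pos hh]
    have a1 := hK (t₀ + h); rw [e1] at a1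
    have a2 := hK (t₀ - h); rw [e2] at a2
    obtain ⟨b1, b2⟩ := abs_le.mp a1
    obtain ⟨b3, b4⟩ := abs_le.mp a2
    have h2 : g₀ (t₀ + h) - g₀ (t₀ - h) ≤ 2 * K * h ^ α := by linarith
    have hs : Real.sqrt (h / c) = Real.sqrt h / Real.sqrt c := Real.sqrt_div hh.le c
    have hrw : h ^ α = Real.sqrt h * h ^ β := by
      rw [show α = 1 / 2 + β by rw [hβdef]; ring, Real.rpow_add hh,
        ← Real.sqrt_eq_rpow]
    have hsh : 0 < Real.sqrt h := Real.sqrt_pos.mpr hh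
    rw [← mul_le_mul_iff_right₀ hsh]
    calc Real.sqrt h * (m / Real.sqrt c) = Real.sqrt (h / c) * m := by rw [hs]; ring
      _ ≤ 2 * K * h ^ α := le_trans h1 h2
      _ = Real.sqrt h * (2 * K * h ^ β) := by rw [hrw]; ring
  have hten : Filter.Tendsto (fun h : ℝ => 2 * K * h ^ β)
      (nhdsWithin 0 (Set.Ioi 0)) (nhds 0) := by
    have h1 : Filter.Tendsto (fun h : ℝ => h ^ β) (nhds 0) (nhds 0) := by
      have h0 : (0 : ℝ) ^ β = 0 := Real.zero_rpow hβpos.ne'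
      have h2 := (Real.continuousAt_rpow_const 0 β (Or.inr hβpos.le)).tendsto
      rwa [h0] at h2
    have h3 := h1.const_mul (2 * K)
    rw [mul_zero] at h3
    exact h3.mono_left nhdsWithin_le_nhds
  have hev : ∀ᶠ h in nhdsWithin (0 : ℝ) (Set.Ioi 0),
      m / Real.sqrt c ≤ 2 * K * h ^ β := by
    filter_upwards [Ioo_mem_nhdsGT hh₀pos] with h hh
    exact hupper h hh.1 hh.2
  have hfinal : m / Real.sqrt c ≤ 0 := ge_of_tendsto hten hev
  have : 0 < m / Real.sqrt c := div_pos hm hsc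
  linarith
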